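/- Let Ω be a convex body in ℝ^d contained in a ball of radius R, and let α be in the η-interior of Ω. Then for every unit vector u in ℝ^d, the normalized-Lebesgue mass of the half-space {x ∈ Ω : ⟨x − α + (η/2)u, −u⟩ ≥ 0} is at least (η/(4R))^d. -/

import Mathlib

open MeasureTheory

/-- For a convex body `Ω ⊆ ℝ^d` contained in a ball of radius `R` with
`B_η(α) ⊆ Ω`, every half-space whose boundary passes within `η/2` of `α`
contains at least an `(η/(4R))^d` fraction of the (Lebesgue) mass of `Ω`. -/
theorem stmt_11 (d : ℕ) (Ω : Set (EuclideanSpace ℝ (Fin d)))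
    (hcompact : IsCompact Ω) (hconv : Convex ℝ Ω)
    (R η : ℝ) (hη : 0 < η) (hR : Ω ⊆ Metric.closedBall 0 R)
    (α : EuclideanSpace ℝ (Fin d)) (hball : Metric.ball α η ⊆ Ω) :
    ∀ u : EuclideanSpace ℝ (Fin d), ‖u‖ = 1 →
      ENNReal.ofReal ((η / (4 * R)) ^ d) ≤
        volume {x ∈ Ω | 0 ≤ (inner ℝ (x - α + (η / 2) • u) (-u) : ℝ)} / volume Ω := by
  intro u hu
  have hfin : volume Ω ≠ ⊤ := hcompact.measure_lt_top.ne
  have hpos : volume Ω ≠ 0 := by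
    have h1 : 0 < volume (Metric.ball α η) := Metric.measure_ball_pos volume α hη
    exact fun h => (h1.trans_le (measure_mono hball)).ne' h
  -- R is positive
  have hx1 : α + (η / 2) • u ∈ Metric.ball α η := by
    rw [Metric.mem_ball, dist_eq_norm]
    simp only [add_sub_cancel_left, norm_smul, hu, mul_one, Real.norm_eq_abs,
      abs_of_pos (half_pos hη)]
    linarith
  have hx2 : α - (η / 2) • u ∈ Metric.ball α η := by
    rw [Metric.mem_ball, dist_eq_norm]
    simp only [sub_sub_cancel_left, norm_neg, norm_smul, hu, mul_one, Real.norm_eq_abs,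
      abs_of_pos (half_pos hη)]
    linarith
  have hR0 : 0 < R := by
    have h1 := hR (hball hx1)
    have h2 := hR (hball hx2)
    rw [Metric.mem_closedBall, dist_zero_right] at h1 h2
    have : ‖(α + (η / 2) • u) - (α - (η / 2) • u)‖ ≤ 2 * R := by
      calc ‖(α + (η / 2) • u) - (α - (η / 2) • u)‖
          ≤ ‖α + (η / 2) • u‖ + ‖α - (η / 2) • u‖ := norm_sub_le _ _
        _ ≤ 2 * R := by linarith
    have he : (α + (η / 2) • u) - (α - (η / 2) • u) = η • u := by
      rw [add_sub_sub_cancel, ← add_smul]; ring_nf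
    rw [he, norm_smul, hu, mul_one, Real.norm_eq_abs, abs_of_pos hη] at this
    linarith
  set c := α - (3 * η / 4) • u with hc
  have hsub : Metric.ball c (η / 4) ⊆
      {x ∈ Ω | 0 ≤ (inner ℝ (x - α + (η / 2) • u) (-u) : ℝ)} := by
    intro x hx
    rw [Metric.mem_ball, dist_eq_norm] at hx
    constructor
    · apply hball
      rw [Metric.mem_ball, dist_eq_norm]
      have : x - α = (x - c) + (c - α) := by abel
      rw [this]
      calc ‖(x - c) + (c - α)‖ ≤ ‖x - c‖ + ‖c - α‖ := norm_add_le _ _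
        _ < η / 4 + 3 * η / 4 := by
            apply add_lt_add_of_lt_of_le hx
            rw [hc]
            simp only [sub_sub_cancel_left, norm_neg, norm_smul, hu, mul_one, Real.norm_eq_abs,
              abs_of_nonneg (by linarith : (0:ℝ) ≤ 3 * η / 4)]
            exact le_refl _
        _ = η := by ring
    · have hinner : (inner ℝ (x - c) u : ℝ) ≤ η / 4 := by
        calc (inner ℝ (x - c) u : ℝ) ≤ ‖x - c‖ * ‖u‖ := real_inner_le_norm _ _
          _ ≤ η / 4 := by rw [hu, mul_one]; exact hx.le
      have hexp : x - α + (η / 2) • u = (x - c) + (-(η / 4)) • u := by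
        module
      rw [hexp, inner_neg_right, inner_add_left, real_inner_smul_left,
        real_inner_self_eq_norm_sq, hu]
      nlinarith
  have hd : Module.finrank ℝ (EuclideanSpace ℝ (Fin d)) = d := finrank_euclideanSpace_fin
  have hball_vol : volume (Metric.ball c (η / 4)) =
      ENNReal.ofReal ((η / 4) ^ d) * volume (Metric.ball (0 : EuclideanSpace ℝ (Fin d)) 1) := by
    rw [Measure.addHaar_ball_of_pos volume c (by linarith : (0:ℝ) < η / 4), hd]
  have hΩ_vol : volume Ω ≤
      ENNReal.ofReal (R ^ d) * volume (Metric.ball (0 : EuclideanSpace ℝ (Fin d)) 1) := by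
    calc volume Ω ≤ volume (Metric.closedBall (0 : EuclideanSpace ℝ (Fin d)) R) :=
          measure_mono hR
      _ = ENNReal.ofReal (R ^ d) * volume (Metric.ball (0 : EuclideanSpace ℝ (Fin d)) 1) := by
          rw [Measure.addHaar_closedBall volume _ hR0.le, hd]
  rw [ENNReal.le_div_iff_mul_le (Or.inl hpos) (Or.inl hfin)]
  calc ENNReal.ofReal ((η / (4 * R)) ^ d) * volume Ω
      ≤ ENNReal.ofReal ((η / (4 * R)) ^ d) *
        (ENNReal.ofReal (R ^ d) * volume (Metric.ball (0 : EuclideanSpace ℝ (Fin d)) 1)) :=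
        mul_le_mul_right hΩ_vol _
    _ = ENNReal.ofReal ((η / 4) ^ d) * volume (Metric.ball (0 : EuclideanSpace ℝ (Fin d)) 1) := by
        rw [← mul_assoc, ← ENNReal.ofReal_mul (by positivity), ← mul_pow]
        congr 3
        field_simp
    _ = volume (Metric.ball c (η / 4)) := hball_vol.symm
    _ ≤ volume {x ∈ Ω | 0 ≤ (inner ℝ (x - α + (η / 2) • u) (-u) : ℝ)} := measure_mono hsub
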